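/- In a plane graph where any two triangles have distance at least 2, every face f of size d(f) is adjacent to at most ⌊d(f)/3⌋ faces of size 3 (counted with multiplicity of shared edges), provided each 3-face shares exactly one edge with f. -/

import Mathlib

open SimpleGraph

universe u

/-- `G` is strictly `f`-degenerate: every nonempty subgraph `R` of `G` contains a vertex `v`
with `d_R(v) < f(v)`. -/
def StrictlyDegenerate {V : Type u} (G : SimpleGraph V) (f : V → ℤ) : Prop :=
  ∀ R : G.Subgraph, R.verts.Nonempty → ∃ v ∈ R.verts, ((R.neighborSet v).ncard : ℤ) < f v

/-- `G` is `k`-degenerate: every nonempty subgraph has a vertex of degree at most `k`. -/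
def Degenerate {V : Type u} (G : SimpleGraph V) (k : ℕ) : Prop :=
  ∀ R : G.Subgraph, R.verts.Nonempty → ∃ v ∈ R.verts, (R.neighborSet v).ncard ≤ k

open Classical in
/-- `WeakReduce G S f` : the graph induced by the set `S` of remaining vertices, together with
the function `f`, can be reduced to the null graph by a sequence of legal `Delete` and
`DeleteSave` operations. -/
inductive WeakReduce {V : Type u} (G : SimpleGraph V) : Set V → (V → ℤ) → Prop
  | nil (f : V → ℤ) : WeakReduce G ∅ f
  | delete (S : Set V) (f : V → ℤ) (u : V) (hu : u ∈ S) (h0 : 0 ≤ f u)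
      (hpos : ∀ x ∈ S \ {u}, 0 ≤ f x - (if G.Adj u x then 1 else 0))
      (ih : WeakReduce G (S \ {u}) (fun x => f x - (if G.Adj u x then 1 else 0))) :
      WeakReduce G S f
  | deleteSave (S : Set V) (f : V → ℤ) (a b : V) (ha : a ∈ S) (hb : b ∈ S)
      (hab : G.Adj a b) (hfab : f b < f a)
      (hpos : ∀ x ∈ S \ {a}, 0 ≤ f x - (if G.Adj a x ∧ x ≠ b then 1 else 0))
      (ih : WeakReduce G (S \ {a}) (fun x => f x - (if G.Adj a x ∧ x ≠ b then 1 else 0))) :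
      WeakReduce G S f

/-- `G` is weakly `f`-degenerate. -/
def WeaklyFDegenerate {V : Type u} (G : SimpleGraph V) (f : V → ℤ) : Prop :=
  WeakReduce G Set.univ f

/-- `G` is weakly `k`-degenerate. -/
def WeaklyDegenerate {V : Type u} (G : SimpleGraph V) (k : ℕ) : Prop :=
  WeaklyFDegenerate G (fun _ => (k : ℤ))

/-- The weak degeneracy `wd(G)`. -/
noncomputable def weakDegeneracy {V : Type u} (G : SimpleGraph V) : ℕ :=
  sInf {k | WeaklyDegenerate G k}

/-- The degeneracy `d(G)`. -/
noncomputable def degeneracy {V : Type u} (G : SimpleGraph V) : ℕ :=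
  sInf {k | Degenerate G k}

/-- A combinatorial plane graph: a graph together with a family of faces, each given by a
closed boundary walk, such that every edge lies on boundary walks with total multiplicity two,
and satisfying Euler's formula when the graph is connected. -/
structure PlaneGraph (V : Type u) [Fintype V] [DecidableEq V] where
  graph : SimpleGraph V
  numFaces : ℕ
  root : Fin numFaces → V
  boundary : (i : Fin numFaces) → graph.Walk (root i) (root i)
  edge_two_faces : ∀ e ∈ graph.edgeSet, (∑ i, ((boundary i).edges.count e)) = 2
  euler : graph.Connected →
    (Fintype.card V : ℤ) - (graph.edgeSet.ncard : ℤ) + (numFaces : ℤ) = 2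

/-- The size of a face: the length of its boundary closed walk. -/
def PlaneGraph.faceSize {V : Type u} [Fintype V] [DecidableEq V] (P : PlaneGraph V)
    (i : Fin P.numFaces) : ℕ :=
  (P.boundary i).length

/-- A graph is planar if it admits a plane embedding. -/
def SimpleGraph.IsPlanarEmb {V : Type u} [Fintype V] [DecidableEq V]
    (G : SimpleGraph V) : Prop :=
  ∃ P : PlaneGraph V, P.graph = G

/-- `G` has no cycle of length `n`. -/
def NoCycleLength {V : Type u} (G : SimpleGraph V) (n : ℕ) : Prop :=
  ∀ (v : V) (c : G.Walk v v), c.IsCycle → c.length ≠ n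

/-- A triangle of `G`, as a set of three pairwise adjacent vertices. -/
def IsTriangle {V : Type u} (G : SimpleGraph V) (s : Finset V) : Prop :=
  s.card = 3 ∧ ∀ x ∈ s, ∀ y ∈ s, x ≠ y → G.Adj x y

/-- Any two (distinct) triangles of `G` are at distance at least `2`. -/
def TrianglesFar {V : Type u} (G : SimpleGraph V) : Prop :=
  ∀ s t : Finset V, IsTriangle G s → IsTriangle G t → s ≠ t →
    ∀ x ∈ s, ∀ y ∈ t, 2 ≤ G.dist x y


/-- The `k`-th edge of a walk joins the `k`-th and `(k+1)`-th vertices. -/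
lemma myEdgesGet {V : Type u} {G : SimpleGraph V} {u v : V} (w : G.Walk u v) :
    ∀ (k : ℕ) (h : k < w.edges.length), w.edges[k] = s(w.getVert k, w.getVert (k + 1)) := by
  induction w with
  | nil => intro k h; simp at h
  | cons huv p ih =>
    intro k h
    cases k with
    | zero =>
      simp [SimpleGraph.Walk.edges_cons, SimpleGraph.Walk.getVert_zero,
        SimpleGraph.Walk.getVert_cons_succ]
    | succ n =>
      simp only [SimpleGraph.Walk.edges_cons, List.getElem_cons_succ,
        SimpleGraph.Walk.getVert_cons_succ]
      exact ih n (by simpa using h)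

/-- Facts about a closed walk of length 3: its support is contained in its first three
vertices, and every pair of distinct such vertices is joined by an edge of the walk. -/
lemma walk3_facts {V : Type u} {G : SimpleGraph V} {r : V} (b : G.Walk r r)
    (h3 : b.length = 3) :
    (∀ x ∈ b.support, x = b.getVert 0 ∨ x = b.getVert 1 ∨ x = b.getVert 2) ∧
    (∀ x y, (x = b.getVert 0 ∨ x = b.getVert 1 ∨ x = b.getVert 2) →
      (y = b.getVert 0 ∨ y = b.getVert 1 ∨ y = b.getVert 2) → x ≠ y →
      G.Adj x y ∧ s(x, y) ∈ b.edges) := by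
  have hg3 : b.getVert 3 = b.getVert 0 := by
    rw [← h3, SimpleGraph.Walk.getVert_length, SimpleGraph.Walk.getVert_zero]
  have hel : b.edges.length = 3 := by rw [SimpleGraph.Walk.length_edges, h3]
  have e0 : s(b.getVert 0, b.getVert 1) ∈ b.edges := by
    have := myEdgesGet b 0 (by omega); rw [← this]; exact List.getElem_mem _
  have e1 : s(b.getVert 1, b.getVert 2) ∈ b.edges := by
    have := myEdgesGet b 1 (by omega); rw [← this]; exact List.getElem_mem _
  have e2 : s(b.getVert 2, b.getVert 0) ∈ b.edges := by
    have := myEdgesGet b 2 (by omega); rw [hg3] at this; rw [← this]; exact List.getElem_mem _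
  have a0 : G.Adj (b.getVert 0) (b.getVert 1) := b.adj_getVert_succ (by omega)
  have a1 : G.Adj (b.getVert 1) (b.getVert 2) := b.adj_getVert_succ (by omega)
  have a2 : G.Adj (b.getVert 2) (b.getVert 0) := by
    have := b.adj_getVert_succ (i := 2) (by omega); rwa [hg3] at this
  constructor
  · intro x hx
    obtain ⟨n, hn, hle⟩ := SimpleGraph.Walk.mem_support_iff_exists_getVert.mp hx
    rw [h3] at hle
    interval_cases n
    · exact Or.inl hn.symm
    · exact Or.inr (Or.inl hn.symm)
    · exact Or.inr (Or.inr hn.symm)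
    · rw [hg3] at hn; exact Or.inl hn.symm
  · rintro x y (rfl | rfl | rfl) (rfl | rfl | rfl) hne
    · exact absurd rfl hne
    · exact ⟨a0, e0⟩
    · exact ⟨a2.symm, Sym2.eq_swap ▸ e2⟩
    · exact ⟨a0.symm, Sym2.eq_swap ▸ e0⟩
    · exact absurd rfl hne
    · exact ⟨a1, e1⟩
    · exact ⟨a2, e2⟩
    · exact ⟨a1.symm, Sym2.eq_swap ▸ e1⟩
    · exact absurd rfl hne

/-- Circular packing: a set of positions in `[0, d)` pairwise (cyclically) at least `3`
apart has at most `d / 3` elements. -/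
lemma circ_pack {d : ℕ} (hd : 3 ≤ d) (s : Finset ℕ)
    (gap : ∀ x ∈ s, ∀ y ∈ s, x < y → x + 3 ≤ y ∧ y + 3 ≤ x + d) :
    s.card ≤ d / 3 := by
  rcases s.eq_empty_or_nonempty with rfl | hne
  · simp
  have hmmem : s.min' hne ∈ s := s.min'_mem hne
  set m := s.min' hne with hm
  calc s.card ≤ (Finset.range (d / 3)).card := ?_
    _ = d / 3 := Finset.card_range _
  apply Finset.card_le_card_of_injOn (fun x => (x - m) / 3)
  · intro x hx
    simp only [Finset.coe_range, Set.mem_Iio, Finset.mem_coe, Finset.mem_range]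
    rcases eq_or_lt_of_le (s.min'_le x hx) with h | h
    · rw [← h]; omega
    · have h2 := (gap m hmmem x hx h).2
      omega
  · intro x hx y hy hxy
    rcases lt_trichotomy x y with h | h | h
    · have h1 := (gap x hx y hy h).1
      have h2 := s.min'_le x hx
      simp only at hxy; omega
    · exact h
    · have h1 := (gap y hy x hx h).1
      have h2 := s.min'_le y hy
      simp only at hxy; omega

/-- in a plane graph with triangles pairwise at distance at least `2`, a face
`i` is adjacent to at most `⌊d(i)/3⌋` faces of size `3`, provided each such `3`-face shares
exactly one edge with `i`. -/
theorem stmt19 {V : Type u} [Fintype V] [DecidableEq V] (P : PlaneGraph V)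
    (ht : TrianglesFar P.graph) (i : Fin P.numFaces)
    (hone : ∀ j : Fin P.numFaces, j ≠ i → P.faceSize j = 3 →
      (∃ e : Sym2 V, e ∈ (P.boundary j).edges ∧ e ∈ (P.boundary i).edges) →
      ((P.boundary j).edges.toFinset ∩ (P.boundary i).edges.toFinset).card = 1) :
    {j : Fin P.numFaces | j ≠ i ∧ P.faceSize j = 3 ∧
        ∃ e : Sym2 V, e ∈ (P.boundary j).edges ∧ e ∈ (P.boundary i).edges}.ncard ≤
      P.faceSize i / 3 := by
  classical
  set w := P.boundary i with hwdef
  set d := P.faceSize i with hddef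
  set v : ℕ → V := fun k => w.getVert k with hvdef
  set S : Set (Fin P.numFaces) := {j : Fin P.numFaces | j ≠ i ∧ P.faceSize j = 3 ∧
        ∃ e : Sym2 V, e ∈ (P.boundary j).edges ∧ e ∈ w.edges} with hSdef
  have hfin : S.Finite := Set.toFinite _
  rw [Set.ncard_eq_toFinset_card _ hfin]
  have hlen : w.edges.length = d := by
    rw [SimpleGraph.Walk.length_edges]; rfl
  have hadj : ∀ k, k < d → P.graph.Adj (v k) (v (k + 1)) := by
    intro k hk
    exact w.adj_getVert_succ (by rw [hddef] at hk; exact hk)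
  have hwrap : v d = v 0 := by
    show w.getVert d = w.getVert 0
    rw [hddef]
    show w.getVert w.length = _
    rw [SimpleGraph.Walk.getVert_length, SimpleGraph.Walk.getVert_zero]
  have hsum : ∀ e ∈ P.graph.edgeSet, ∀ t : Finset (Fin P.numFaces),
      (∑ k ∈ t, ((P.boundary k).edges.count e)) ≤ 2 := by
    intro e he t
    rw [← P.edge_two_faces e he]
    exact Finset.sum_le_sum_of_subset t.subset_univ
  -- choose positions
  have key : ∀ j ∈ S, ∃ q, q < d ∧ s(v q, v (q + 1)) ∈ (P.boundary j).edges := by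
    intro j hj
    obtain ⟨hji, hj3, e, hej, hei⟩ := hj
    obtain ⟨q, hq, hqe⟩ := List.getElem_of_mem hei
    refine ⟨q, by omega, ?_⟩
    rw [← myEdgesGet w q hq, hqe]; exact hej
  choose! p hpd hpe using key
  have hpi : ∀ j ∈ S, s(v (p j), v (p j + 1)) ∈ w.edges := by
    intro j hj
    rw [← myEdgesGet w (p j) (by rw [hlen]; exact hpd j hj)]
    exact List.getElem_mem _
  -- no edge lies on three faces
  have three : ∀ (j j' : Fin P.numFaces), j ≠ j' → j ≠ i → j' ≠ i → ∀ e : Sym2 V,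
      e ∈ (P.boundary j).edges → e ∈ (P.boundary j').edges → e ∈ w.edges → False := by
    intro j j' hjj hji hj'i e h1 h2 h3
    have he : e ∈ P.graph.edgeSet := SimpleGraph.Walk.edges_subset_edgeSet _ h1
    have hs := hsum e he {j, j', i}
    rw [Finset.sum_insert (by simp [hjj, hji]), Finset.sum_insert (by simp [hj'i]),
      Finset.sum_singleton] at hs
    have c1 : 0 < (P.boundary j).edges.count e := List.count_pos_iff.mpr h1
    have c2 : 0 < (P.boundary j').edges.count e := List.count_pos_iff.mpr h2
    have c3 : 0 < (P.boundary i).edges.count e := List.count_pos_iff.mpr h3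
    omega
  -- triangles
  set T : Fin P.numFaces → Finset V := fun j =>
    {(P.boundary j).getVert 0, (P.boundary j).getVert 1, (P.boundary j).getVert 2} with hTdef
  have hmemT : ∀ j, ∀ x, x ∈ T j ↔ (x = (P.boundary j).getVert 0 ∨
      x = (P.boundary j).getVert 1 ∨ x = (P.boundary j).getVert 2) := by
    intro j x; simp [hTdef]
  have hw3 : ∀ j ∈ S, (P.boundary j).length = 3 := by
    intro j hj; exact hj.2.1
  have hTfacts : ∀ j ∈ S,
      (∀ x ∈ (P.boundary j).support, x ∈ T j) ∧
      (∀ x y : V, x ∈ T j → y ∈ T j → x ≠ y →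
        P.graph.Adj x y ∧ s(x, y) ∈ (P.boundary j).edges) := by
    intro j hj
    obtain ⟨hsupp, hpair⟩ := walk3_facts (P.boundary j) (hw3 j hj)
    exact ⟨fun x hx => (hmemT j x).mpr (hsupp x hx),
      fun x y hx hy hne => hpair x y ((hmemT j x).mp hx) ((hmemT j y).mp hy) hne⟩
  have htri : ∀ j ∈ S, IsTriangle P.graph (T j) := by
    intro j hj
    obtain ⟨hsupp, hpair⟩ := hTfacts j hj
    have h01 : (P.boundary j).getVert 0 ≠ (P.boundary j).getVert 1 :=
      ((P.boundary j).adj_getVert_succ (by rw [hw3 j hj]; omega)).ne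
    have h12 : (P.boundary j).getVert 1 ≠ (P.boundary j).getVert 2 :=
      ((P.boundary j).adj_getVert_succ (i := 1) (by rw [hw3 j hj]; omega)).ne
    have h02 : (P.boundary j).getVert 0 ≠ (P.boundary j).getVert 2 := by
      have := (P.boundary j).adj_getVert_succ (i := 2) (by rw [hw3 j hj]; omega)
      have hg3 : (P.boundary j).getVert 3 = (P.boundary j).getVert 0 := by
        rw [← hw3 j hj, SimpleGraph.Walk.getVert_length, SimpleGraph.Walk.getVert_zero]
      rw [hg3] at this
      exact this.ne'
    constructor
    · rw [hTdef]
      rw [Finset.card_insert_of_notMem (by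
          simp only [Finset.mem_insert, Finset.mem_singleton]; push_neg; exact ⟨h01, h02⟩),
        Finset.card_insert_of_notMem (by
          simp only [Finset.mem_singleton]; exact h12), Finset.card_singleton]
    · intro x hx y hy hne
      exact (hpair x y hx hy hne).1
  -- endpoints of the chosen edge lie in the triangle
  have hend1 : ∀ j ∈ S, v (p j) ∈ T j := by
    intro j hj
    exact (hTfacts j hj).1 _ ((P.boundary j).fst_mem_support_of_mem_edges (hpe j hj))
  have hend2 : ∀ j ∈ S, v (p j + 1) ∈ T j := by
    intro j hj
    exact (hTfacts j hj).1 _ ((P.boundary j).snd_mem_support_of_mem_edges (hpe j hj))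
  -- distinct faces have distinct triangles
  have hTne : ∀ j ∈ S, ∀ j' ∈ S, j ≠ j' → T j ≠ T j' := by
    intro j hj j' hj' hne heq
    have hne' : v (p j) ≠ v (p j + 1) := (hadj (p j) (hpd j hj)).ne
    have h1 : v (p j) ∈ T j' := heq ▸ hend1 j hj
    have h2 : v (p j + 1) ∈ T j' := heq ▸ hend2 j hj
    have := ((hTfacts j' hj').2 _ _ h1 h2 hne').2
    exact three j j' hne hj.1 hj'.1 _ (hpe j hj) this (hpi j hj)
  have hdist : ∀ j ∈ S, ∀ j' ∈ S, j ≠ j' → ∀ x ∈ T j, ∀ y ∈ T j',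
      2 ≤ P.graph.dist x y := by
    intro j hj j' hj' hne x hx y hy
    exact ht (T j) (T j') (htri j hj) (htri j' hj') (hTne j hj j' hj' hne) x hx y hy
  -- distance contradictions
  have dist0 : ∀ j ∈ S, ∀ j' ∈ S, j ≠ j' → ∀ x, x ∈ T j → x ∈ T j' → False := by
    intro j hj j' hj' hne x hx hx'
    have := hdist j hj j' hj' hne x hx x hx'
    rw [SimpleGraph.dist_self] at this
    omega
  have dist1 : ∀ j ∈ S, ∀ j' ∈ S, j ≠ j' → ∀ x y, x ∈ T j → y ∈ T j' →
      P.graph.Adj x y → False := by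
    intro j hj j' hj' hne x y hx hy hxy
    have h1 := hdist j hj j' hj' hne x hx y hy
    have h2 : P.graph.dist x y ≤ 1 := by
      have := SimpleGraph.dist_le hxy.toWalk
      simpa using this
    omega
  -- injectivity of positions
  have hinj : ∀ j ∈ S, ∀ j' ∈ S, p j = p j' → j = j' := by
    intro j hj j' hj' hpp
    by_contra hne
    have h2 := hpe j' hj'
    rw [← hpp] at h2
    exact three j j' hne hj.1 hj'.1 _ (hpe j hj) h2 (hpi j hj)
  -- separation
  have sep : ∀ j ∈ S, ∀ j' ∈ S, j ≠ j' → p j < p j' →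
      p j + 3 ≤ p j' ∧ p j' + 3 ≤ p j + d := by
    intro j hj j' hj' hne hlt
    have hx2 := hend1 j hj
    have hx3 := hend2 j hj
    have hy2 := hend1 j' hj'
    have hy3 := hend2 j' hj'
    have hqd : p j' < d := hpd j' hj'
    constructor
    · by_contra hc
      push_neg at hc
      have : p j' = p j + 1 ∨ p j' = p j + 2 := by omega
      rcases this with h1 | h2
      · rw [h1] at hy2
        exact dist0 j hj j' hj' hne _ hx3 hy2
      · have ha := hadj (p j + 1) (by omega)
        rw [show p j + 1 + 1 = p j + 2 by omega, ← h2] at ha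
        exact dist1 j hj j' hj' hne _ _ hx3 hy2 ha
    · by_contra hc
      push_neg at hc
      have : p j' + 1 = p j + d ∨ p j' + 2 = p j + d := by omega
      rcases this with h1 | h2
      · have hp0 : p j = 0 := by omega
        have hv0 : v (p j' + 1) = v (p j) := by rw [h1, hp0, Nat.zero_add, hwrap]
        rw [hv0] at hy3
        exact dist0 j hj j' hj' hne _ hx2 hy3
      · have : p j = 0 ∨ p j = 1 := by omega
        rcases this with hp0 | hp1
        · have ha := hadj (p j' + 1) (by omega)
          have hv0 : v (p j' + 1 + 1) = v (p j) := by
            rw [show p j' + 1 + 1 = p j' + 2 by omega, h2, hp0, Nat.zero_add, hwrap]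
          rw [hv0] at ha
          exact dist1 j hj j' hj' hne _ _ hx2 hy3 ha.symm
        · have ha := hadj 0 (by omega)
          have hv0 : v (p j' + 1) = v 0 := by
            rw [show p j' + 1 = p j + d - 1 by omega, hp1]
            rw [show 1 + d - 1 = d by omega, hwrap]
          have ha' : P.graph.Adj (v (p j)) (v (p j' + 1)) := by
            rw [hv0, hp1]; exact ha.symm
          exact dist1 j hj j' hj' hne _ _ hx2 hy3 ha'
  -- d is at least 3 when S is nonempty
  have hd3 : S.Nonempty → 3 ≤ d := by
    rintro ⟨j, hj⟩
    by_contra hc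
    push_neg at hc
    have h1 : p j < d := hpd j hj
    have : d = 1 ∨ d = 2 := by omega
    rcases this with hd1 | hd2
    · have ha := hadj 0 (by omega)
      rw [show (0 : ℕ) + 1 = d by omega, hwrap] at ha
      exact P.graph.irrefl ha
    · obtain ⟨x, y, hxy⟩ := List.length_eq_two.mp (by rw [hlen, hd2])
      have h0 : x = s(v 0, v 1) := by
        have := myEdgesGet w 0 (by omega)
        simp only [hxy, List.getElem_cons_zero] at this
        exact this
      have hy' : y = s(v 1, v 2) := by
        have := myEdgesGet w 1 (by rw [hlen, hd2]; omega)
        simp only [hxy, List.getElem_cons_succ, List.getElem_cons_zero] at this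
        exact this
      have hyx : y = x := by
        rw [h0, hy', show v 2 = v 0 by rw [← hd2, hwrap], Sym2.eq_swap]
      have hcount : w.edges.count x = 2 := by
        rw [hxy, hyx]; simp
      have hex : s(v (p j), v (p j + 1)) = x := by
        have : p j = 0 ∨ p j = 1 := by omega
        rcases this with h | h
        · rw [h, h0]
        · rw [h, hy'.symm, hyx]
      have he : x ∈ P.graph.edgeSet := by
        rw [← hex]
        exact SimpleGraph.Walk.edges_subset_edgeSet _ (hpe j hj)
      have hs := hsum x he {i, j}
      rw [Finset.sum_insert (by simp [Ne.symm hj.1]), Finset.sum_singleton] at hs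
      have c2 : 0 < (P.boundary j).edges.count x := by
        rw [← hex] at *
        exact List.count_pos_iff.mpr (hpe j hj)
      rw [← hwdef] at hs
      omega
  -- assemble
  have himg : hfin.toFinset.card = (hfin.toFinset.image p).card := by
    rw [Finset.card_image_of_injOn]
    intro j hj j' hj' hpp
    exact hinj j (hfin.mem_toFinset.mp hj) j' (hfin.mem_toFinset.mp hj') hpp
  rw [himg]
  rcases Set.eq_empty_or_nonempty S with hSe | hSne
  · rw [Set.Finite.toFinset_eq_empty.mpr hSe]
    simp
  apply circ_pack (hd3 hSne)
  intro x hx y hy hlt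
  obtain ⟨j, hj, rfl⟩ := Finset.mem_image.mp hx
  obtain ⟨j', hj', rfl⟩ := Finset.mem_image.mp hy
  have hj := hfin.mem_toFinset.mp hj
  have hj' := hfin.mem_toFinset.mp hj'
  have hne : j ≠ j' := by rintro rfl; omega
  exact sep j hj j' hj' hne hlt
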